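/- Let V be a real vector space of finite dimension d, let Λ ⊆ V be a full lattice, and set A = V/Λ. Let a, b be positive integers. Then the kernel of the group homomorphism μ_{b,a}: A × A → A × A, (z, t) ↦ (b·z + a·t, z − t), is finite and has exactly (a+b)^d elements. -/

import Mathlib

/-- Let `V` be a real vector space of finite dimension `d`, `Λ ⊆ V` a full lattice,
and `A = V ⧸ Λ`. For positive integers `a`, `b`, the kernel of the group homomorphism
`μ_{b,a} : A × A → A × A`, `(z, t) ↦ (b•z + a•t, z − t)`, is finite with exactly
`(a + b) ^ d` elements. -/
theorem mu_kernel_card_of_quotient_by_lattice {V : Type*} [AddCommGroup V] [Module ℝ V]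
    [FiniteDimensional ℝ V] (d : ℕ) (hdim : Module.finrank ℝ V = d)
    (Λ : AddSubgroup V) (bΛ : Module.Basis (Fin d) ℤ Λ)
    (hspan : Submodule.span ℝ (Λ : Set V) = ⊤)
    (a b : ℕ) (ha : 0 < a) (hb : 0 < b) :
    {p : (V ⧸ Λ) × (V ⧸ Λ) | (b • p.1 + a • p.2, p.1 - p.2) = (0 : (V ⧸ Λ) × (V ⧸ Λ))}.Finite ∧
    Nat.card {p : (V ⧸ Λ) × (V ⧸ Λ) |
        (b • p.1 + a • p.2, p.1 - p.2) = (0 : (V ⧸ Λ) × (V ⧸ Λ))} = (a + b) ^ d := by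
  classical
  set n : ℕ := a + b with hn
  have hn0 : 0 < n := by omega
  haveI : NeZero n := ⟨hn0.ne'⟩
  have hnR : ((n : ℝ)) ≠ 0 := by exact_mod_cast hn0.ne'
  set T : Set (V ⧸ Λ) := {z | n • z = 0} with hT
  -- Step 1 : the kernel set is equivalent to the n-torsion T
  have eST : {p : (V ⧸ Λ) × (V ⧸ Λ) |
      (b • p.1 + a • p.2, p.1 - p.2) = (0 : (V ⧸ Λ) × (V ⧸ Λ))} ≃ T := by
    refine ⟨fun p => ⟨p.1.1, ?_⟩, fun z => ⟨(z.1, z.1), ?_⟩, ?_, ?_⟩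
    · obtain ⟨⟨z, t⟩, hp⟩ := p
      simp only [Set.mem_setOf_eq, Prod.ext_iff, Prod.fst, Prod.snd] at hp
      obtain ⟨h1, h2⟩ := hp
      have ht : t = z := (sub_eq_zero.mp h2).symm
      subst ht
      have : n • t = 0 := by
        rw [hn, add_nsmul, add_comm]
        exact h1
      simpa [hT] using this
    · obtain ⟨z, hz⟩ := z
      have hz' : n • z = 0 := hz
      have h1 : b • z + a • z = 0 := by rw [← add_nsmul, add_comm b a, ← hn]; exact hz'
      show (b • z + a • z, z - z) = (0 : (V ⧸ Λ) × (V ⧸ Λ))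
      rw [h1, sub_self]
      rfl
    · rintro ⟨⟨z, t⟩, hp⟩
      simp only [Set.mem_setOf_eq, Prod.ext_iff] at hp
      have ht : t = z := (sub_eq_zero.mp hp.2).symm
      subst ht
      rfl
    · rintro ⟨z, hz⟩
      rfl
  -- the homomorphism f : Λ →+ V ⧸ Λ, λ ↦ (1/n) λ mod Λ
  set f : Λ →+ (V ⧸ Λ) := AddMonoidHom.mk'
      (fun x => QuotientAddGroup.mk ((n : ℝ)⁻¹ • (x : V)))
      (by intro x y; simp [smul_add, QuotientAddGroup.mk_add]) with hf
  -- the homomorphism Φ : Λ →+ (Fin d → ZMod n) via coordinates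
  set Φ : Λ →+ (Fin d → ZMod n) := AddMonoidHom.mk'
      (fun x i => ((bΛ.equivFun x i : ℤ) : ZMod n))
      (by intro x y; funext i; simp [map_add]) with hΦ
  have hΦsurj : Function.Surjective Φ := by
    intro c
    choose m hm using fun i => ZMod.intCast_surjective (n := n) (c i)
    refine ⟨bΛ.equivFun.symm m, ?_⟩
    funext i
    rw [hΦ, AddMonoidHom.mk'_apply, LinearEquiv.apply_symm_apply]
    exact hm i
  -- the two kernels agree
  have hker : ∀ x : Λ, f x = 0 ↔ Φ x = 0 := by
    intro x
    constructor
    · intro hx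
      have hmem : (n : ℝ)⁻¹ • (x : V) ∈ Λ := by
        rwa [hf, AddMonoidHom.mk'_apply, QuotientAddGroup.eq_zero_iff] at hx
      set μ : Λ := ⟨(n : ℝ)⁻¹ • (x : V), hmem⟩ with hμ
      have hx' : n • μ = x := by
        apply Subtype.ext
        push_cast
        rw [← Nat.cast_smul_eq_nsmul ℝ n ((n : ℝ)⁻¹ • (x : V)), smul_inv_smul₀ hnR]
      funext i
      rw [hΦ, AddMonoidHom.mk'_apply, ← hx', map_nsmul]
      simp [nsmul_eq_mul]
    · intro hx
      have hdvd : ∀ i, (n : ℤ) ∣ bΛ.equivFun x i := by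
        intro i
        have := congrFun hx i
        rwa [hΦ, AddMonoidHom.mk'_apply, Pi.zero_apply,
          ZMod.intCast_zmod_eq_zero_iff_dvd] at this
      set m : Fin d → ℤ := fun i => bΛ.equivFun x i / n with hm
      set μ : Λ := bΛ.equivFun.symm m with hμ
      have hx' : n • μ = x := by
        apply bΛ.equivFun.injective
        rw [map_nsmul, hμ, LinearEquiv.apply_symm_apply]
        funext i
        simp only [Pi.smul_apply, nsmul_eq_mul, hm]
        exact Int.mul_ediv_cancel' (hdvd i)
      rw [hf, AddMonoidHom.mk'_apply, QuotientAddGroup.eq_zero_iff, ← hx']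
      have : ((n • μ : Λ) : V) = (n : ℝ) • (μ : V) := by
        push_cast
        rw [Nat.cast_smul_eq_nsmul ℝ n (μ : V)]
      rw [this, inv_smul_smul₀ hnR]
      exact μ.2
  have hkerEq : f.ker = Φ.ker := by
    ext x
    simpa [AddMonoidHom.mem_ker] using hker x
  -- T is the range of f
  have hrange : T = Set.range f := by
    ext z
    constructor
    · intro hz
      induction z using QuotientAddGroup.induction_on with
      | H v =>
        have h0 : ((n • v : V) : V ⧸ Λ) = 0 := by
          have : n • ((v : V ⧸ Λ)) = 0 := hz
          rwa [← QuotientAddGroup.mk_nsmul] at this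
        have hmem : (n • v : V) ∈ Λ := (QuotientAddGroup.eq_zero_iff _).mp h0
        refine ⟨⟨n • v, hmem⟩, ?_⟩
        rw [hf, AddMonoidHom.mk'_apply]
        have hvv : (n : ℝ)⁻¹ • ((⟨n • v, hmem⟩ : Λ) : V) = v := by
          show (n : ℝ)⁻¹ • (n • v) = v
          rw [← Nat.cast_smul_eq_nsmul ℝ n v, inv_smul_smul₀ hnR]
        rw [hvv]
    · rintro ⟨x, rfl⟩
      simp only [hT, Set.mem_setOf_eq, hf, AddMonoidHom.mk'_apply]
      rw [← QuotientAddGroup.mk_nsmul, ← Nat.cast_smul_eq_nsmul ℝ n, smul_inv_smul₀ hnR]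
      exact (QuotientAddGroup.eq_zero_iff _).mpr x.2
  -- assemble the equivalence T ≃ (Fin d → ZMod n)
  have eTQ : T ≃ (Fin d → ZMod n) := by
    refine (Equiv.setCongr hrange).trans ?_
    refine ((QuotientAddGroup.quotientKerEquivRange f).toEquiv.symm).trans ?_
    refine (AddEquiv.toEquiv ?_)
    rw [hkerEq]
    exact QuotientAddGroup.quotientKerEquivOfSurjective Φ hΦsurj
  have eS : {p : (V ⧸ Λ) × (V ⧸ Λ) |
      (b • p.1 + a • p.2, p.1 - p.2) = (0 : (V ⧸ Λ) × (V ⧸ Λ))} ≃ (Fin d → ZMod n) :=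
    eST.trans eTQ
  have hfin : Finite ({p : (V ⧸ Λ) × (V ⧸ Λ) |
      (b • p.1 + a • p.2, p.1 - p.2) = (0 : (V ⧸ Λ) × (V ⧸ Λ))} : Set _) :=
    Finite.of_equiv _ eS.symm
  refine ⟨Set.finite_coe_iff.mp hfin, ?_⟩
  rw [Nat.card_congr eS, Nat.card_pi]
  simp [Nat.card_zmod]
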